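/- (Grafting on 3-node trees.) Let $w_1, w_2 \in (-1,1)$ and define $\Sigma_1 = \begin{pmatrix}1 & w_1 & w_1 w_2\\ w_1 & 1 & w_2\\ w_1 w_2 & w_2 & 1\end{pmatrix}$, $\Sigma_2 = \begin{pmatrix}1 & w_1 & w_2\\ w_1 & 1 & w_1 w_2\\ w_2 & w_1 w_2 & 1\end{pmatrix}$. Then the eigenvalues of $\Sigma_1\Sigma_2^{-1}$ are $\{1, \lambda_{\max}, 1/\lambda_{\max}\}$ where $\lambda_{\max} = \frac{\sqrt{\beta}+w_2}{\sqrt{\beta}-w_2}$ and $\beta = w_2^2 + 2\frac{1-w_2^2}{1-w_1}$. -/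

import Mathlib

open Matrix Polynomial

theorem stmt11 (w1 w2 : ℝ) (hw1 : w1 ∈ Set.Ioo (-1 : ℝ) 1)
    (hw2 : w2 ∈ Set.Ioo (-1 : ℝ) 1) (hw2ne : w2 ≠ 0) :
    let β : ℝ := w2 ^ 2 + 2 * (1 - w2 ^ 2) / (1 - w1)
    let lmax : ℝ := (Real.sqrt β + w2) / (Real.sqrt β - w2)
    let S1 : Matrix (Fin 3) (Fin 3) ℝ :=
      !![1, w1, w1 * w2; w1, 1, w2; w1 * w2, w2, 1]
    let S2 : Matrix (Fin 3) (Fin 3) ℝ :=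
      !![1, w1, w2; w1, 1, w1 * w2; w2, w1 * w2, 1]
    (S1 * S2⁻¹).charpoly = (X - C 1) * (X - C lmax) * (X - C lmax⁻¹) := by
  intro β lmax S1 S2
  obtain ⟨hw1l, hw1r⟩ := hw1
  obtain ⟨hw2l, hw2r⟩ := hw2
  have h1 : (0:ℝ) < 1 - w1 := by linarith
  have h2 : (0:ℝ) < 1 - w2 ^ 2 := by nlinarith
  have h3 : (0:ℝ) < 1 - w1 ^ 2 := by nlinarith
  have hβdef : β = w2 ^ 2 + 2 * (1 - w2 ^ 2) / (1 - w1) := rfl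
  have hbw : 0 < β - w2 ^ 2 := by
    rw [hβdef]; have := div_pos (by nlinarith : (0:ℝ) < 2 * (1 - w2 ^ 2)) h1
    linarith
  have hβpos : 0 < β := by nlinarith
  set s : ℝ := Real.sqrt β with hsdef
  have hs2 : s ^ 2 = β := Real.sq_sqrt hβpos.le
  have hsnn : 0 ≤ s := Real.sqrt_nonneg β
  have hsw : w2 ^ 2 < s ^ 2 := by rw [hs2]; linarith
  have hsm : 0 < s - w2 := by nlinarith
  have hsp : 0 < s + w2 := by nlinarith
  have hldef : lmax = (s + w2) / (s - w2) := rfl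
  have hlne : lmax ≠ 0 := by
    rw [hldef]; exact div_ne_zero hsp.ne' hsm.ne'
  have hlinv : lmax⁻¹ = (s - w2) / (s + w2) := by
    rw [hldef, inv_div]
  -- real coefficient identity
  have hTd : (1 + lmax + lmax⁻¹) * ((1 - w1 ^ 2) * (1 - w2 ^ 2))
      = (1 - w1 ^ 2) * (3 - w2 ^ 2 - 2 * w1 * w2 ^ 2) := by
    rw [hldef, hlinv]
    have hs2' : s ^ 2 * (1 - w1) = w2 ^ 2 * (1 - w1) + 2 * (1 - w2 ^ 2) := by
      rw [hs2, hβdef]; field_simp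
    field_simp
    linear_combination (-2 * w2 ^ 2) * hs2'
  -- determinant of S2
  have hdet2 : S2.det = (1 - w1 ^ 2) * (1 - w2 ^ 2) := by
    show Matrix.det _ = _
    rw [Matrix.det_fin_three]
    simp [S2]
    ring
  have hd : ((1 - w1 ^ 2) * (1 - w2 ^ 2)) ≠ 0 := by positivity
  have hdet2u : IsUnit S2.det := by rw [hdet2]; exact isUnit_iff_ne_zero.mpr hd
  have hA : (S1 * S2⁻¹) * S2 = S1 := by
    rw [mul_assoc, Matrix.nonsing_inv_mul S2 hdet2u, mul_one]
  -- key: multiply charpoly by C (det S2)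
  have key : (S1 * S2⁻¹).charpoly * C ((1 - w1 ^ 2) * (1 - w2 ^ 2))
      = ((Matrix.scalar (Fin 3) (X : ℝ[X])) * S2.map C - S1.map C).det := by
    rw [← hdet2, Matrix.charpoly, RingHom.map_det, ← Matrix.det_mul]
    congr 1
    rw [charmatrix, sub_mul]
    congr 1
    rw [RingHom.mapMatrix_apply, RingHom.mapMatrix_apply, ← Matrix.map_mul, hA]
  have hab : C lmax * C lmax⁻¹ = (1 : ℝ[X]) := by
    rw [← C_mul, mul_inv_cancel₀ hlne, C_1]
  have hCT : ((1:ℝ[X]) + C lmax + C lmax⁻¹) * ((1 - C w1 ^ 2) * (1 - C w2 ^ 2))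
      = (1 - C w1 ^ 2) * (3 - C w2 ^ 2 - 2 * C w1 * C w2 ^ 2) := by
    have := congrArg C hTd
    simpa only [C_mul, C_add, C_sub, C_1, C_pow, _root_.map_ofNat] using this
  apply mul_right_cancel₀ (b := C ((1 - w1 ^ 2) * (1 - w2 ^ 2)))
    (Polynomial.C_ne_zero.mpr hd)
  rw [key, Matrix.det_fin_three]
  simp [Matrix.scalar_apply, Matrix.diagonal_mul, S1, S2, C_mul, C_1, C_sub, C_pow]
  linear_combination (X^2 - X) * hCT
    - (X - 1) * ((1 - C w1 ^ 2) * (1 - C w2 ^ 2)) * hab
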